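/- (Proposition 2, Conclusion A) Suppose (q_l, q_r, θ̃_l, θ̃_r) : [0,∞) → (ℝⁿ)⁴ is a solution (q_i twice continuously differentiable, θ̃_i continuously differentiable) of the closed-loop equations M_i(q_i) q̈_i + C_i(q_i, q̇_i) q̇_i = f_i(t) − K_s ⌈q_i − q_j⌋^{p_U} + K_{ci} ⌈θ̃_i⌋^{p_U} and θ̃̇_i = −(K_{ci}/D_{ci})^{1/p_F} ⌈θ̃_i⌋^{r₂/r₁} − q̇_i for (i,j) ∈ {(l,r),(r,l)}, where the external forces f_i : [0,∞) → ℝⁿ are continuous and satisfy the passivity assumption A1 along the solution. Then the position error q_l − q_r, the velocities q̇_l, q̇_r, and the controller errors θ̃_l, θ̃_r are bounded on [0,∞). -/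

import Mathlib

open Matrix intervalIntegral

set_option maxHeartbeats 1000000

/-- Signed power function: `⌈x⌋^p = |x|^p · sign(x)` with `sign 0 = 0`. -/
noncomputable def spow (p x : ℝ) : ℝ := |x| ^ p * Real.sign x

lemma spow_neg' (p x : ℝ) : spow p (-x) = -spow p x := by
  rcases lt_trichotomy x 0 with h | h | h
  · simp [spow, abs_neg, Real.sign_of_neg h, Real.sign_of_pos (neg_pos.2 h)]
  · simp [h, spow, Real.sign_zero]
  · simp [spow, abs_neg, Real.sign_of_pos h, Real.sign_of_neg (neg_neg_iff_pos.2 h)]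

lemma spow_mul_spow_nonneg (p q x : ℝ) : 0 ≤ spow p x * spow q x := by
  have h : spow p x * spow q x = (|x| ^ p * |x| ^ q) * (Real.sign x * Real.sign x) := by
    simp [spow]; ring
  rw [h]
  have := mul_self_nonneg (Real.sign x)
  positivity

lemma my_hasDerivAt_abs_rpow {p : ℝ} (hp : 1 < p) (x : ℝ) :
    HasDerivAt (fun y : ℝ => |y| ^ p) (p * spow (p - 1) x) x := by
  refine (hasDerivAt_abs_rpow x hp).congr_deriv ?_
  rcases lt_trichotomy x 0 with h | h | h
  · rw [spow, Real.sign_of_neg h]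
    rw [show p - 1 = (p - 2) + 1 by ring, Real.rpow_add (abs_pos.2 h.ne), Real.rpow_one,
      abs_of_neg h]
    ring
  · simp [h, spow]
  · rw [spow, Real.sign_of_pos h]
    rw [show p - 1 = (p - 2) + 1 by ring, Real.rpow_add (abs_pos.2 h.ne'), Real.rpow_one,
      abs_of_pos h]
    ring

lemma fderiv_apply_eq_sum {n : ℕ} (f : (Fin n → ℝ) → ℝ) (q v : Fin n → ℝ) :
    fderiv ℝ f q v = ∑ k, v k * fderiv ℝ f q (Pi.single k 1) := by
  have hv : v = ∑ k, v k • (Pi.single k 1 : Fin n → ℝ) := by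
    funext j
    simp [Finset.sum_apply, Pi.single_apply, Finset.sum_ite_eq, mul_ite]
  conv_lhs => rw [hv]
  rw [map_sum]
  exact Finset.sum_congr rfl fun k _ => by rw [_root_.map_smul]; rfl

lemma skew_quad_zero {n : ℕ} (S : Matrix (Fin n) (Fin n) ℝ) (hS : ∀ i j, S i j = -S j i)
    (v : Fin n → ℝ) : ∑ i, ∑ j, v i * v j * S i j = 0 := by
  have h : (∑ i, ∑ j, v i * v j * S i j) = -∑ i, ∑ j, v i * v j * S i j := by
    conv_lhs => rw [Finset.sum_comm]
    rw [← Finset.sum_neg_distrib]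
    refine Finset.sum_congr rfl fun j _ => ?_
    rw [← Finset.sum_neg_distrib]
    refine Finset.sum_congr rfl fun i _ => ?_
    rw [hS j i]; ring
  linarith

lemma quad_deriv {n : ℕ} (M : (Fin n → ℝ) → Matrix (Fin n) (Fin n) ℝ)
    (C : (Fin n → ℝ) → (Fin n → ℝ) → Matrix (Fin n) (Fin n) ℝ)
    (hM_diff : ∀ a b : Fin n, ContDiff ℝ 1 fun q => M q a b)
    (hM_symm : ∀ q, (M q)ᵀ = M q)
    (hP3 : ∀ q v : Fin n → ℝ, ∀ a b : Fin n,
      ((∑ k, v k * fderiv ℝ (fun q' => M q' a b) q (Pi.single k 1)) - 2 * C q v a b)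
        = -((∑ k, v k * fderiv ℝ (fun q' => M q' b a) q (Pi.single k 1)) - 2 * C q v b a))
    (q v acc : ℝ → Fin n → ℝ) (t : ℝ)
    (hq : HasDerivAt q (v t) t) (hv : HasDerivAt v (acc t) t) :
    HasDerivAt (fun s => v s ⬝ᵥ (M (q s) *ᵥ v s))
      (2 * (v t ⬝ᵥ (M (q t) *ᵥ acc t + C (q t) (v t) *ᵥ v t))) t := by
  have hvk : ∀ k, HasDerivAt (fun s => v s k) (acc t k) t := fun k => hasDerivAt_pi.1 hv k
  have hM : ∀ i j, HasDerivAt (fun s => M (q s) i j)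
      (fderiv ℝ (fun q' => M q' i j) (q t) (v t)) t := by
    intro i j
    exact (((hM_diff i j).differentiable one_ne_zero) (q t)).hasFDerivAt.comp_hasDerivAt t hq
  set dM : Matrix (Fin n) (Fin n) ℝ := fun i j => fderiv ℝ (fun q' => M q' i j) (q t) (v t)
    with hdM
  have key : HasDerivAt (fun s => ∑ i, ∑ j, v s i * (M (q s) i j * v s j))
      (∑ i, ∑ j, (acc t i * (M (q t) i j * v t j)
        + v t i * (dM i j * v t j + M (q t) i j * acc t j))) t := by
    refine HasDerivAt.fun_sum fun i _ => ?_
    refine HasDerivAt.fun_sum fun j _ => ?_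
    exact (hvk i).mul ((hM i j).mul (hvk j))
  have hfun : (fun s => v s ⬝ᵥ (M (q s) *ᵥ v s))
      = fun s => ∑ i, ∑ j, v s i * (M (q s) i j * v s j) := by
    funext s
    simp [dotProduct, mulVec, Finset.mul_sum]
  rw [hfun]
  refine key.congr_deriv ?_
  have hsymm : ∀ i j, M (q t) i j = M (q t) j i := by
    intro i j
    have h := congrFun (congrFun (hM_symm (q t)) j) i
    rwa [transpose_apply] at h
  have hskew : ∑ i, ∑ j, v t i * v t j * (dM i j - 2 * C (q t) (v t) i j) = 0 := by
    refine skew_quad_zero _ (fun i j => ?_) (v t)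
    have := hP3 (q t) (v t) i j
    rw [hdM]
    simp only [← fderiv_apply_eq_sum] at this
    simpa using this
  have hAB : ∑ i, ∑ j, acc t i * (M (q t) i j * v t j)
      = ∑ i, ∑ j, v t i * (M (q t) i j * acc t j) := by
    rw [Finset.sum_comm]
    refine Finset.sum_congr rfl fun i _ => Finset.sum_congr rfl fun j _ => ?_
    rw [hsymm i j]; ring
  have e1 : v t ⬝ᵥ (M (q t) *ᵥ acc t) = ∑ i, ∑ j, v t i * (M (q t) i j * acc t j) := by
    simp [dotProduct, mulVec, Finset.mul_sum]
  have e2 : v t ⬝ᵥ (C (q t) (v t) *ᵥ v t)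
      = ∑ i, ∑ j, v t i * (C (q t) (v t) i j * v t j) := by
    simp [dotProduct, mulVec, Finset.mul_sum]
  have expand : 2 * (v t ⬝ᵥ (M (q t) *ᵥ acc t + C (q t) (v t) *ᵥ v t))
      = 2 * ∑ i, ∑ j, v t i * (M (q t) i j * acc t j)
        + 2 * ∑ i, ∑ j, v t i * (C (q t) (v t) i j * v t j) := by
    rw [dotProduct_add, e1, e2, mul_add]
  rw [expand]
  have split : ∑ i, ∑ j, (acc t i * (M (q t) i j * v t j)
        + v t i * (dM i j * v t j + M (q t) i j * acc t j))
      = (∑ i, ∑ j, acc t i * (M (q t) i j * v t j))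
        + (∑ i, ∑ j, v t i * v t j * dM i j)
        + (∑ i, ∑ j, v t i * (M (q t) i j * acc t j)) := by
    rw [← Finset.sum_add_distrib, ← Finset.sum_add_distrib]
    refine Finset.sum_congr rfl fun i _ => ?_
    rw [← Finset.sum_add_distrib, ← Finset.sum_add_distrib]
    refine Finset.sum_congr rfl fun j _ => ?_
    ring
  rw [split, hAB]
  have hskew' : ∑ i, ∑ j, v t i * v t j * dM i j
      = 2 * ∑ i, ∑ j, v t i * (C (q t) (v t) i j * v t j) := by
    have h2 : ∑ i, ∑ j, v t i * v t j * (dM i j - 2 * C (q t) (v t) i j)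
        = (∑ i, ∑ j, v t i * v t j * dM i j)
          - 2 * ∑ i, ∑ j, v t i * (C (q t) (v t) i j * v t j) := by
      rw [Finset.mul_sum, ← Finset.sum_sub_distrib]
      refine Finset.sum_congr rfl fun i _ => ?_
      rw [Finset.mul_sum, ← Finset.sum_sub_distrib]
      refine Finset.sum_congr rfl fun j _ => ?_
      ring
    rw [h2] at hskew
    linarith
  rw [hskew']
  ring

lemma abs_le_rpow_of_rpow_le {x A p : ℝ} (hp : 0 < p) (h : |x| ^ p ≤ A) :
    |x| ≤ A ^ (1/p) := by
  have h0 : (0:ℝ) ≤ |x| ^ p := Real.rpow_nonneg (abs_nonneg x) p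
  calc |x| = (|x| ^ p) ^ (1/p) := by
        rw [← Real.rpow_mul (abs_nonneg x), mul_one_div_cancel hp.ne', Real.rpow_one]
    _ ≤ A ^ (1/p) := Real.rpow_le_rpow h0 h (by positivity)
/-- Proposition 2, Conclusion A: boundedness of the position error, velocities and
controller errors for the output-feedback P+d controller C2 under passive forces. -/
theorem stmt9 (n : ℕ)
    (Ml Mr : (Fin n → ℝ) → Matrix (Fin n) (Fin n) ℝ)
    (Cl Cr : (Fin n → ℝ) → (Fin n → ℝ) → Matrix (Fin n) (Fin n) ℝ)
    -- Assumption A2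
    (m1 m2 : ℝ) (hm1 : 0 < m1) (hm12 : m1 ≤ m2)
    (hMl_diff : ∀ a b : Fin n, ContDiff ℝ 1 fun q => Ml q a b)
    (hMr_diff : ∀ a b : Fin n, ContDiff ℝ 1 fun q => Mr q a b)
    (hMl_symm : ∀ q, (Ml q)ᵀ = Ml q) (hMr_symm : ∀ q, (Mr q)ᵀ = Mr q)
    (hMl_bnd : ∀ q x : Fin n → ℝ,
      m1 * (x ⬝ᵥ x) ≤ x ⬝ᵥ (Ml q *ᵥ x) ∧ x ⬝ᵥ (Ml q *ᵥ x) ≤ m2 * (x ⬝ᵥ x))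
    (hMr_bnd : ∀ q x : Fin n → ℝ,
      m1 * (x ⬝ᵥ x) ≤ x ⬝ᵥ (Mr q *ᵥ x) ∧ x ⬝ᵥ (Mr q *ᵥ x) ≤ m2 * (x ⬝ᵥ x))
    (hCl_cont : Continuous fun p : (Fin n → ℝ) × (Fin n → ℝ) => Cl p.1 p.2)
    (hCr_cont : Continuous fun p : (Fin n → ℝ) × (Fin n → ℝ) => Cr p.1 p.2)
    -- Property P3
    (hP3l : ∀ q v : Fin n → ℝ, ∀ a b : Fin n,
      ((∑ k, v k * fderiv ℝ (fun q' => Ml q' a b) q (Pi.single k 1)) - 2 * Cl q v a b)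
        = -((∑ k, v k * fderiv ℝ (fun q' => Ml q' b a) q (Pi.single k 1)) - 2 * Cl q v b a))
    (hP3r : ∀ q v : Fin n → ℝ, ∀ a b : Fin n,
      ((∑ k, v k * fderiv ℝ (fun q' => Mr q' a b) q (Pi.single k 1)) - 2 * Cr q v a b)
        = -((∑ k, v k * fderiv ℝ (fun q' => Mr q' b a) q (Pi.single k 1)) - 2 * Cr q v b a))
    -- homogeneity weights and control gains
    (r1 r2 : ℝ) (hr2 : 0 < r2) (hr12 : r2 < r1) (hr1 : r1 < 2 * r2)
    (pU pF : ℝ) (hpU : pU = (2 * r2 - r1) / r1) (hpF : pF = (2 * r2 - r1) / r2)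
    (Ks Kcl Kcr Dcl Dcr : ℝ) (hKs : 0 < Ks)
    (hKcl : 0 < Kcl) (hKcr : 0 < Kcr) (hDcl : 0 < Dcl) (hDcr : 0 < Dcr)
    -- a solution on [0,∞)
    (ql qr vl vr al ar θl θr : ℝ → (Fin n → ℝ))
    (hql : ∀ t : ℝ, 0 ≤ t → HasDerivAt ql (vl t) t)
    (hqr : ∀ t : ℝ, 0 ≤ t → HasDerivAt qr (vr t) t)
    (hvl : ∀ t : ℝ, 0 ≤ t → HasDerivAt vl (al t) t)
    (hvr : ∀ t : ℝ, 0 ≤ t → HasDerivAt vr (ar t) t)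
    (hal : ContinuousOn al (Set.Ici 0)) (har : ContinuousOn ar (Set.Ici 0))
    -- controller error dynamics
    (hθl : ∀ t : ℝ, 0 ≤ t → HasDerivAt θl
      (fun k => -((Kcl / Dcl) ^ (1 / pF) * spow (r2 / r1) (θl t k)) - vl t k) t)
    (hθr : ∀ t : ℝ, 0 ≤ t → HasDerivAt θr
      (fun k => -((Kcr / Dcr) ^ (1 / pF) * spow (r2 / r1) (θr t k)) - vr t k) t)
    -- continuous external forces satisfying Assumption A1 along the solution
    (fl fr : ℝ → (Fin n → ℝ)) (hfl : Continuous fl) (hfr : Continuous fr)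
    (κl κr : ℝ) (hκl : 0 < κl) (hκr : 0 < κr)
    (hA1l : ∀ t : ℝ, 0 ≤ t → (∫ σ in (0:ℝ)..t, vl σ ⬝ᵥ fl σ) ≤ κl)
    (hA1r : ∀ t : ℝ, 0 ≤ t → (∫ σ in (0:ℝ)..t, vr σ ⬝ᵥ fr σ) ≤ κr)
    -- the closed-loop equations
    (heql : ∀ t : ℝ, 0 ≤ t →
      Ml (ql t) *ᵥ al t + Cl (ql t) (vl t) *ᵥ vl t
        = fun k => fl t k - Ks * spow pU (ql t k - qr t k) + Kcl * spow pU (θl t k))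
    (heqr : ∀ t : ℝ, 0 ≤ t →
      Mr (qr t) *ᵥ ar t + Cr (qr t) (vr t) *ᵥ vr t
        = fun k => fr t k - Ks * spow pU (qr t k - ql t k) + Kcr * spow pU (θr t k)) :
    ∃ B : ℝ, ∀ t : ℝ, 0 ≤ t →
      ‖ql t - qr t‖ ≤ B ∧ ‖vl t‖ ≤ B ∧ ‖vr t‖ ≤ B ∧ ‖θl t‖ ≤ B ∧ ‖θr t‖ ≤ B := by  -- basic facts about exponents
  have hr1pos : 0 < r1 := lt_trans hr2 hr12
  have hpU_pos : 0 < pU := by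
    rw [hpU]; apply div_pos <;> linarith
  have hpU_lt : pU < 1 := by
    rw [hpU, div_lt_one hr1pos]; linarith
  have hp1 : (1:ℝ) < pU + 1 := by linarith
  have hp0 : pU + 1 ≠ 0 := by linarith
  -- the energy function
  set E : ℝ → ℝ := fun s =>
    1/2 * (vl s ⬝ᵥ (Ml (ql s) *ᵥ vl s)) + 1/2 * (vr s ⬝ᵥ (Mr (qr s) *ᵥ vr s))
      + Ks/(pU+1) * ∑ k, |ql s k - qr s k| ^ (pU+1)
      + Kcl/(pU+1) * ∑ k, |θl s k| ^ (pU+1)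
      + Kcr/(pU+1) * ∑ k, |θr s k| ^ (pU+1) with hE_def
  -- dissipation
  set h : ℝ → ℝ := fun s =>
    ∑ k, (Kcl * (Kcl/Dcl) ^ (1/pF) * (spow pU (θl s k) * spow (r2/r1) (θl s k))
      + Kcr * (Kcr/Dcr) ^ (1/pF) * (spow pU (θr s k) * spow (r2/r1) (θr s k))) with hh_def
  have hh_nonneg : ∀ s, 0 ≤ h s := by
    intro s
    refine Finset.sum_nonneg fun k _ => ?_
    have c1 : (0:ℝ) ≤ (Kcl/Dcl) ^ (1/pF) := Real.rpow_nonneg (by positivity) _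
    have c2 : (0:ℝ) ≤ (Kcr/Dcr) ^ (1/pF) := Real.rpow_nonneg (by positivity) _
    have s1 := spow_mul_spow_nonneg pU (r2/r1) (θl s k)
    have s2 := spow_mul_spow_nonneg pU (r2/r1) (θr s k)
    have := hKcl.le; have := hKcr.le
    positivity
  -- the modified force integrand (globally continuous)
  set g : ℝ → ℝ := fun σ => vl (max σ 0) ⬝ᵥ fl σ + vr (max σ 0) ⬝ᵥ fr σ with hg_def
  have hvl_c : Continuous fun σ : ℝ => vl (max σ 0) := by
    rw [continuous_iff_continuousAt]
    intro σ
    have hmx : ContinuousAt (fun s : ℝ => max s 0) σ :=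
      (continuous_id.max continuous_const).continuousAt
    exact ContinuousAt.comp ((hvl (max σ 0) (le_max_right _ _)).continuousAt) hmx
  have hvr_c : Continuous fun σ : ℝ => vr (max σ 0) := by
    rw [continuous_iff_continuousAt]
    intro σ
    have hmx : ContinuousAt (fun s : ℝ => max s 0) σ :=
      (continuous_id.max continuous_const).continuousAt
    exact ContinuousAt.comp ((hvr (max σ 0) (le_max_right _ _)).continuousAt) hmx
  have hg_cont : Continuous g := by
    rw [hg_def]
    refine Continuous.add ?_ ?_
    · exact continuous_finset_sum _ fun k _ =>
        ((continuous_apply k).comp hvl_c).mul ((continuous_apply k).comp hfl)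
    · exact continuous_finset_sum _ fun k _ =>
        ((continuous_apply k).comp hvr_c).mul ((continuous_apply k).comp hfr)
  set G : ℝ → ℝ := fun s => ∫ σ in (0:ℝ)..s, g σ with hG_def
  have hG_deriv : ∀ t : ℝ, HasDerivAt G (g t) t := by
    intro t
    exact intervalIntegral.integral_hasDerivAt_right
      (hg_cont.intervalIntegrable 0 t)
      (hg_cont.stronglyMeasurableAtFilter _ _)
      hg_cont.continuousAt
  -- derivative of E
  have hE_deriv : ∀ t : ℝ, 0 ≤ t → HasDerivAt E (g t - h t) t := by
    intro t ht
    have quadL := quad_deriv Ml Cl hMl_diff hMl_symm hP3l ql vl al t (hql t ht) (hvl t ht)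
    have quadR := quad_deriv Mr Cr hMr_diff hMr_symm hP3r qr vr ar t (hqr t ht) (hvr t ht)
    rw [heql t ht] at quadL
    rw [heqr t ht] at quadR
    have potE : HasDerivAt (fun s => ∑ k, |ql s k - qr s k| ^ (pU+1))
        (∑ k, (pU+1) * spow pU (ql t k - qr t k) * (vl t k - vr t k)) t := by
      refine HasDerivAt.fun_sum fun k _ => ?_
      have hx : HasDerivAt (fun s => ql s k - qr s k) (vl t k - vr t k) t :=
        (hasDerivAt_pi.1 (hql t ht) k).sub (hasDerivAt_pi.1 (hqr t ht) k)
      have := (my_hasDerivAt_abs_rpow hp1 (ql t k - qr t k)).comp t hx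
      simpa [Function.comp_def, show pU + 1 - 1 = pU by ring, mul_assoc] using this
    have potL : HasDerivAt (fun s => ∑ k, |θl s k| ^ (pU+1))
        (∑ k, (pU+1) * spow pU (θl t k)
          * (-((Kcl/Dcl) ^ (1/pF) * spow (r2/r1) (θl t k)) - vl t k)) t := by
      refine HasDerivAt.fun_sum fun k _ => ?_
      have hx := hasDerivAt_pi.1 (hθl t ht) k
      have := (my_hasDerivAt_abs_rpow hp1 (θl t k)).comp t hx
      simpa [Function.comp_def, show pU + 1 - 1 = pU by ring, mul_assoc] using this
    have potR : HasDerivAt (fun s => ∑ k, |θr s k| ^ (pU+1))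
        (∑ k, (pU+1) * spow pU (θr t k)
          * (-((Kcr/Dcr) ^ (1/pF) * spow (r2/r1) (θr t k)) - vr t k)) t := by
      refine HasDerivAt.fun_sum fun k _ => ?_
      have hx := hasDerivAt_pi.1 (hθr t ht) k
      have := (my_hasDerivAt_abs_rpow hp1 (θr t k)).comp t hx
      simpa [Function.comp_def, show pU + 1 - 1 = pU by ring, mul_assoc] using this
    have H := ((((quadL.const_mul (1/2 : ℝ)).add (quadR.const_mul (1/2 : ℝ))).add
      (potE.const_mul (Ks/(pU+1)))).add (potL.const_mul (Kcl/(pU+1)))).add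
      (potR.const_mul (Kcr/(pU+1)))
    refine H.congr_deriv ?_
    rw [hg_def, hh_def]
    simp only [max_eq_left ht]
    simp only [dotProduct, Finset.mul_sum, ← Finset.sum_add_distrib, ← Finset.sum_sub_distrib]
    refine Finset.sum_congr rfl fun k _ => ?_
    rw [show qr t k - ql t k = -(ql t k - qr t k) by ring, spow_neg']
    field_simp
    ring
  -- W = E - G is antitone on [0, ∞)
  set W : ℝ → ℝ := fun s => E s - G s with hW_def
  have hW_deriv : ∀ t : ℝ, 0 ≤ t → HasDerivAt W (-(h t)) t := by
    intro t ht
    have := (hE_deriv t ht).sub (hG_deriv t)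
    refine this.congr_deriv ?_
    ring
  have hW_anti : AntitoneOn W (Set.Ici 0) := by
    refine antitoneOn_of_deriv_nonpos (convex_Ici 0)
      (fun t ht => (hW_deriv t ht).continuousAt.continuousWithinAt)
      (fun t ht => ?_) (fun t ht => ?_)
    · rw [interior_Ici] at ht
      exact ((hW_deriv t ht.le).differentiableAt).differentiableWithinAt
    · rw [interior_Ici] at ht
      rw [(hW_deriv t ht.le).deriv]
      simpa using hh_nonneg t
  -- hence E t ≤ E 0 + G t ≤ E 0 + κl + κr
  have hG_bnd : ∀ t : ℝ, 0 ≤ t → G t ≤ κl + κr := by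
    intro t ht
    have hil : IntervalIntegrable (fun σ => vl (max σ 0) ⬝ᵥ fl σ) MeasureTheory.volume 0 t := by
      refine Continuous.intervalIntegrable ?_ 0 t
      exact continuous_finset_sum _ fun k _ =>
        ((continuous_apply k).comp hvl_c).mul ((continuous_apply k).comp hfl)
    have hir : IntervalIntegrable (fun σ => vr (max σ 0) ⬝ᵥ fr σ) MeasureTheory.volume 0 t := by
      refine Continuous.intervalIntegrable ?_ 0 t
      exact continuous_finset_sum _ fun k _ =>
        ((continuous_apply k).comp hvr_c).mul ((continuous_apply k).comp hfr)
    have hsplit : G t = (∫ σ in (0:ℝ)..t, vl (max σ 0) ⬝ᵥ fl σ)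
        + ∫ σ in (0:ℝ)..t, vr (max σ 0) ⬝ᵥ fr σ := by
      rw [hG_def]
      exact intervalIntegral.integral_add hil hir
    have hcl : (∫ σ in (0:ℝ)..t, vl (max σ 0) ⬝ᵥ fl σ) = ∫ σ in (0:ℝ)..t, vl σ ⬝ᵥ fl σ := by
      refine intervalIntegral.integral_congr fun σ hσ => ?_
      rw [Set.uIcc_of_le ht] at hσ
      rw [max_eq_left hσ.1]
    have hcr : (∫ σ in (0:ℝ)..t, vr (max σ 0) ⬝ᵥ fr σ) = ∫ σ in (0:ℝ)..t, vr σ ⬝ᵥ fr σ := by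
      refine intervalIntegral.integral_congr fun σ hσ => ?_
      rw [Set.uIcc_of_le ht] at hσ
      rw [max_eq_left hσ.1]
    rw [hsplit, hcl, hcr]
    exact add_le_add (hA1l t ht) (hA1r t ht)
  have hEt_le : ∀ t : ℝ, 0 ≤ t → E t ≤ E 0 + (κl + κr) := by
    intro t ht
    have hW0 := hW_anti (Set.self_mem_Ici) ht ht
    have hG0 : G 0 = 0 := intervalIntegral.integral_same
    rw [hW_def] at hW0
    simp only [hG0, sub_zero] at hW0
    have := hG_bnd t ht
    linarith [hW0]
  -- nonnegativity / lower bounds on the pieces of E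
  have hdot_nonneg : ∀ x : Fin n → ℝ, 0 ≤ x ⬝ᵥ x := fun x =>
    Finset.sum_nonneg fun k _ => mul_self_nonneg _
  have hpot_nonneg : ∀ (x : Fin n → ℝ), 0 ≤ ∑ k, |x k| ^ (pU+1) := fun x =>
    Finset.sum_nonneg fun k _ => Real.rpow_nonneg (abs_nonneg _) _
  set K : ℝ := E 0 + (κl + κr) with hK_def
  -- bound pieces
  have piece_bounds : ∀ t : ℝ, 0 ≤ t →
      1/2 * (m1 * (vl t ⬝ᵥ vl t)) ≤ K ∧ 1/2 * (m1 * (vr t ⬝ᵥ vr t)) ≤ K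
        ∧ Ks/(pU+1) * ∑ k, |ql t k - qr t k| ^ (pU+1) ≤ K
        ∧ Kcl/(pU+1) * ∑ k, |θl t k| ^ (pU+1) ≤ K
        ∧ Kcr/(pU+1) * ∑ k, |θr t k| ^ (pU+1) ≤ K := by
    intro t ht
    have hEt := hEt_le t ht
    have q1 := (hMl_bnd (ql t) (vl t)).1
    have q2 := (hMr_bnd (qr t) (vr t)).1
    have n1 := hdot_nonneg (vl t)
    have n2 := hdot_nonneg (vr t)
    have n3 := hpot_nonneg (fun k => ql t k - qr t k)
    have n4 := hpot_nonneg (θl t)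
    have n5 := hpot_nonneg (θr t)
    have cKs : 0 ≤ Ks/(pU+1) := by positivity
    have cKl : 0 ≤ Kcl/(pU+1) := by positivity
    have cKr : 0 ≤ Kcr/(pU+1) := by positivity
    have p3 : 0 ≤ Ks/(pU+1) * ∑ k, |ql t k - qr t k| ^ (pU+1) := mul_nonneg cKs n3
    have p4 : 0 ≤ Kcl/(pU+1) * ∑ k, |θl t k| ^ (pU+1) := mul_nonneg cKl n4
    have p5 : 0 ≤ Kcr/(pU+1) * ∑ k, |θr t k| ^ (pU+1) := mul_nonneg cKr n5
    have m01 : 0 ≤ m1 * (vl t ⬝ᵥ vl t) := mul_nonneg hm1.le n1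
    have m02 : 0 ≤ m1 * (vr t ⬝ᵥ vr t) := mul_nonneg hm1.le n2
    rw [hE_def] at hEt
    simp only at hEt
    exact ⟨by linarith, by linarith, by linarith, by linarith, by linarith⟩
  -- helper bounds
  have vel_bound : ∀ x : Fin n → ℝ, 1/2 * (m1 * (x ⬝ᵥ x)) ≤ K →
      ∀ k, |x k| ≤ Real.sqrt (2*K/m1) := by
    intro x hx k
    have h1 : x k * x k ≤ x ⬝ᵥ x :=
      Finset.single_le_sum (f := fun j => x j * x j)
        (fun j _ => mul_self_nonneg _) (Finset.mem_univ k)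
    have h2 : x ⬝ᵥ x ≤ 2*K/m1 := by rw [le_div_iff₀ hm1]; linarith
    have h3 : x k ^ 2 ≤ 2*K/m1 := by rw [sq]; linarith
    calc |x k| = Real.sqrt (x k ^ 2) := (Real.sqrt_sq_eq_abs _).symm
      _ ≤ Real.sqrt (2*K/m1) := Real.sqrt_le_sqrt h3
  have pot_bound : ∀ c : ℝ, 0 < c → ∀ x : Fin n → ℝ,
      c/(pU+1) * ∑ k, |x k| ^ (pU+1) ≤ K →
      ∀ k, |x k| ≤ (K*(pU+1)/c) ^ (1/(pU+1)) := by
    intro c hc x hx k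
    have h1 : |x k| ^ (pU+1) ≤ ∑ j, |x j| ^ (pU+1) :=
      Finset.single_le_sum (f := fun j => |x j| ^ (pU+1))
        (fun j _ => Real.rpow_nonneg (abs_nonneg _) _) (Finset.mem_univ k)
    have h2 : c * ∑ j, |x j| ^ (pU+1) ≤ K * (pU+1) := by
      have e : c * ∑ j, |x j| ^ (pU+1) = (c/(pU+1) * ∑ j, |x j| ^ (pU+1)) * (pU+1) := by
        field_simp
      rw [e]
      exact mul_le_mul_of_nonneg_right hx (by linarith)
    have h3 : ∑ j, |x j| ^ (pU+1) ≤ K*(pU+1)/c := by rw [le_div_iff₀ hc]; linarith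
    exact abs_le_rpow_of_rpow_le (by linarith) (le_trans h1 h3)
  have hK0 : 0 ≤ K := by
    have hb := (piece_bounds 0 le_rfl).1
    have := hdot_nonneg (vl 0)
    have := mul_nonneg hm1.le (hdot_nonneg (vl 0))
    linarith
  -- the bound
  set B : ℝ := Real.sqrt (2*K/m1) + (K*(pU+1)/Ks) ^ (1/(pU+1))
    + (K*(pU+1)/Kcl) ^ (1/(pU+1)) + (K*(pU+1)/Kcr) ^ (1/(pU+1)) with hB_def
  have nn0 : 0 ≤ Real.sqrt (2*K/m1) := Real.sqrt_nonneg _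
  have nn1 : 0 ≤ (K*(pU+1)/Ks) ^ (1/(pU+1)) :=
    Real.rpow_nonneg (div_nonneg (mul_nonneg hK0 (by linarith)) hKs.le) _
  have nn2 : 0 ≤ (K*(pU+1)/Kcl) ^ (1/(pU+1)) :=
    Real.rpow_nonneg (div_nonneg (mul_nonneg hK0 (by linarith)) hKcl.le) _
  have nn3 : 0 ≤ (K*(pU+1)/Kcr) ^ (1/(pU+1)) :=
    Real.rpow_nonneg (div_nonneg (mul_nonneg hK0 (by linarith)) hKcr.le) _
  have hBnn : 0 ≤ B := by rw [hB_def]; linarith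
  have norm_le : ∀ x : Fin n → ℝ, (∀ k, |x k| ≤ B) → ‖x‖ ≤ B := by
    intro x hk
    rw [pi_norm_le_iff_of_nonneg hBnn]
    intro k
    rw [Real.norm_eq_abs]
    exact hk k
  refine ⟨B, fun t ht => ?_⟩
  obtain ⟨b1, b2, b3, b4, b5⟩ := piece_bounds t ht
  refine ⟨?_, ?_, ?_, ?_, ?_⟩
  · refine norm_le _ fun k => ?_
    have := pot_bound Ks hKs (fun k => ql t k - qr t k) b3 k
    simp only [Pi.sub_apply]
    rw [hB_def]
    linarith
  · refine norm_le _ fun k => ?_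
    have := vel_bound (vl t) b1 k
    rw [hB_def]
    linarith
  · refine norm_le _ fun k => ?_
    have := vel_bound (vr t) b2 k
    rw [hB_def]
    linarith
  · refine norm_le _ fun k => ?_
    have := pot_bound Kcl hKcl (θl t) b4 k
    rw [hB_def]
    linarith
  · refine norm_le _ fun k => ?_
    have := pot_bound Kcr hKcr (θr t) b5 k
    rw [hB_def]
    linarith
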